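/- Endow {0,?,1} with the partial order in which 0 ⊲ ? and 1 ⊲ ? (0 and 1 incomparable). Let η, η̃ ∈ {0,?,1}^ℤ satisfy η(x) ⊴ η̃(x) for all x. Then for each n ∈ ℤ, F̂_{p,q}η̃(n) stochastically dominates F̂_{p,q}η(n) with respect to ⊴: for every upward-closed subset U of ({0,?,1}, ⊴), Prob[F̂η(n) ∈ U] ≤ Prob[F̂η̃(n) ∈ U]. -/

import Mathlib

open MeasureTheory

inductive PSym : Type
  | zero : PSym
  | quest : PSym
  | one : PSym
deriving DecidableEq

instance : Fintype PSym where
  elems := {PSym.zero, PSym.quest, PSym.one}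
  complete := fun x => by cases x <;> simp

instance : MeasurableSpace PSym := ⊤

abbrev Config : Type := ℤ → PSym

open PSym

/-- the symbol lies in `{0, ?}` -/
def lowQ (a : PSym) : Prop := a = PSym.zero ∨ a = PSym.quest

instance : DecidablePred lowQ := fun a => by unfold lowQ; infer_instance

/-- the window `(η k, η (k+1))` lies in `{0,?}² \ {(0,0)}` -/
def star2 (η : Config) (k : ℤ) : Prop :=
  lowQ (η k) ∧ lowQ (η (k + 1)) ∧ ¬(η k = PSym.zero ∧ η (k + 1) = PSym.zero)

/-- the window `(η k, η (k+1), η (k+2))` lies in `{0,?}³ \ {(0,0,0)}` -/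
def star3 (η : Config) (k : ℤ) : Prop :=
  lowQ (η k) ∧ lowQ (η (k + 1)) ∧ lowQ (η (k + 2)) ∧
    ¬(η k = PSym.zero ∧ η (k + 1) = PSym.zero ∧ η (k + 2) = PSym.zero)

/-- translation by `k` -/
def shiftBy (k : ℤ) (η : Config) : Config := fun n => η (n + k)

/-- reflection -/
def reflect (η : Config) : Config := fun n => η (-n)

/-- the single-site stochastic update rule of the envelope PCA `F̂_{p,q}`:
`phi p q a b c d` is the probability that the output symbol is `d` when the
neighbourhood reads `(a, b, c)`. -/
noncomputable def phi (p q : ℝ) (a b c d : PSym) : ℝ :=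
  if a = PSym.zero ∧ b = PSym.zero ∧ c = PSym.zero then
    (if d = PSym.zero then p else if d = PSym.one then 1 - p else 0)
  else if lowQ a ∧ lowQ b ∧ lowQ c then
    (if d = PSym.zero then p else if d = PSym.one then q else 1 - p - q)
  else
    (if d = PSym.zero then 1 - q else if d = PSym.one then q else 0)

/-- the partial order with `0 ⊴ ?`, `1 ⊴ ?`, and `0, 1` incomparable -/
def qrel (a b : PSym) : Prop := a = b ∨ b = PSym.quest

lemma phi_mono (p q : ℝ) (hp0 : 0 ≤ p) (hq0 : 0 ≤ q) (hpq : p + q ≤ 1)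
    (a b c a' b' c' : PSym)
    (h1 : qrel a a') (h2 : qrel b b') (h3 : qrel c c') (d : PSym) :
    phi p q a b c d + phi p q a b c PSym.quest ≤
      phi p q a' b' c' d + phi p q a' b' c' PSym.quest := by
  rcases h1 with rfl | rfl <;> rcases h2 with rfl | rfl <;> rcases h3 with rfl | rfl <;>
    cases a <;> cases b <;> cases c <;> cases d <;> simp [phi, lowQ] <;> linarith

lemma phi_mono_q (p q : ℝ) (hp0 : 0 ≤ p) (hq0 : 0 ≤ q) (hpq : p + q ≤ 1)
    (a b c a' b' c' : PSym)
    (h1 : qrel a a') (h2 : qrel b b') (h3 : qrel c c') :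
    phi p q a b c PSym.quest ≤ phi p q a' b' c' PSym.quest := by
  rcases h1 with rfl | rfl <;> rcases h2 with rfl | rfl <;> rcases h3 with rfl | rfl <;>
    cases a <;> cases b <;> cases c <;> simp [phi, lowQ] <;> linarith

lemma phi_total (p q : ℝ) (a b c : PSym) :
    phi p q a b c PSym.zero + phi p q a b c PSym.quest + phi p q a b c PSym.one = 1 := by
  cases a <;> cases b <;> cases c <;> simp [phi, lowQ] <;> ring

lemma sum3 (f : PSym → ℝ) :
    ∑ d ∈ ({PSym.zero, PSym.quest, PSym.one} : Finset PSym), f d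
      = f PSym.zero + f PSym.quest + f PSym.one := by
  simp [Finset.sum_insert, add_assoc]

lemma sum2a (f : PSym → ℝ) :
    ∑ d ∈ ({PSym.zero, PSym.quest} : Finset PSym), f d = f PSym.zero + f PSym.quest := by
  simp [Finset.sum_insert]

lemma sum2b (f : PSym → ℝ) :
    ∑ d ∈ ({PSym.one, PSym.quest} : Finset PSym), f d = f PSym.one + f PSym.quest := by
  simp [Finset.sum_insert]

lemma key16 (p q : ℝ) (hp0 : 0 ≤ p) (hp1 : p ≤ 1) (hq0 : 0 ≤ q) (hq1 : q ≤ 1)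
    (hpq : p + q ≤ 1) (a b c a' b' c' : PSym)
    (h1 : qrel a a') (h2 : qrel b b') (h3 : qrel c c')
    (U : Finset PSym) (hU : ∀ x y : PSym, x ∈ U → qrel x y → y ∈ U) :
    ∑ d ∈ U, phi p q a b c d ≤ ∑ d ∈ U, phi p q a' b' c' d := by
  by_cases h0 : PSym.zero ∈ U <;> by_cases hq' : PSym.quest ∈ U <;>
      by_cases ho : PSym.one ∈ U
  · have hUe : U = ({PSym.zero, PSym.quest, PSym.one} : Finset PSym) := by
      ext x; cases x <;> simp [h0, hq', ho]
    subst hUe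
    rw [sum3, sum3]
    have t1 := phi_total p q a b c
    have t2 := phi_total p q a' b' c'
    linarith
  · have hUe : U = ({PSym.zero, PSym.quest} : Finset PSym) := by
      ext x; cases x <;> simp [h0, hq', ho]
    subst hUe
    rw [sum2a, sum2a]
    exact phi_mono p q hp0 hq0 hpq a b c a' b' c' h1 h2 h3 PSym.zero
  · exact absurd (hU _ _ h0 (Or.inr rfl)) hq'
  · exact absurd (hU _ _ h0 (Or.inr rfl)) hq'
  · have hUe : U = ({PSym.one, PSym.quest} : Finset PSym) := by
      ext x; cases x <;> simp [h0, hq', ho]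
    subst hUe
    rw [sum2b, sum2b]
    exact phi_mono p q hp0 hq0 hpq a b c a' b' c' h1 h2 h3 PSym.one
  · have hUe : U = ({PSym.quest} : Finset PSym) := by
      ext x; cases x <;> simp [h0, hq', ho]
    subst hUe
    rw [Finset.sum_singleton, Finset.sum_singleton]
    exact phi_mono_q p q hp0 hq0 hpq a b c a' b' c' h1 h2 h3
  · exact absurd (hU _ _ ho (Or.inr rfl)) hq'
  · have hUe : U = (∅ : Finset PSym) := by
      ext x; cases x <;> simp [h0, hq', ho]
    subst hUe; simp

theorem stmt16 (p q : ℝ) (hp0 : 0 ≤ p) (hp1 : p ≤ 1) (hq0 : 0 ≤ q) (hq1 : q ≤ 1)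
    (hpq : p + q ≤ 1) (η ηt : Config)
    (hle : ∀ x : ℤ, qrel (η x) (ηt x)) (n : ℤ)
    (U : Finset PSym) (hU : ∀ a b : PSym, a ∈ U → qrel a b → b ∈ U) :
    ∑ b ∈ U, phi p q (η n) (η (n + 1)) (η (n + 2)) b ≤
      ∑ b ∈ U, phi p q (ηt n) (ηt (n + 1)) (ηt (n + 2)) b := by
  exact key16 p q hp0 hp1 hq0 hq1 hpq _ _ _ _ _ _ (hle n) (hle (n+1)) (hle (n+2)) U hU
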